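/- Let Q be a divisible commutative quantale and let x ≤ a ≤ b in Q. Then the element y := b ⊗ (a ⧵ x) satisfies y ≤ b and a ⊗_b y = x, where x ⊗_b y := b ⊗ (b ⧵ x) ⊗ (b ⧵ y). In other words, the interval [⊥, b] with the smooth slice multiplication is again divisible. -/
import Mathlib

/-- Residuation in a quantale: `a ⧵ b = sSup {c | a * c ≤ b}`. -/
def res {Q : Type*} [Mul Q] [CompleteLattice Q] (a b : Q) : Q := sSup {c | a * c ≤ b}

/-- The smooth slice multiplication on `[⊥, b]`: `x ⊗_b y = b * (b ⧵ x) * (b ⧵ y)`. -/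
def smul {Q : Type*} [Mul Q] [CompleteLattice Q] (b x y : Q) : Q := b * res b x * res b y

section aux
variable {Q : Type*} [CommSemigroup Q] [CompleteLattice Q] [IsQuantale Q]

lemma mul_res_le (a x : Q) : a * res a x ≤ x := by
  rw [res, mul_sSup_distrib]
  exact iSup₂_le fun c hc => hc

lemma le_res {a c x : Q} (h : a * c ≤ x) : c ≤ res a x := le_sSup h

lemma mul_res_eq (hdiv : ∀ a b : Q, a ≤ b → ∃ c, a = b * c) {x a : Q} (hxa : x ≤ a) :
    a * res a x = x := by
  obtain ⟨c, hc⟩ := hdiv x a hxa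
  refine le_antisymm (mul_res_le a x) ?_
  calc x = a * c := hc
    _ ≤ a * res a x := mul_le_mul_right (le_res hc.ge) a

lemma mul_top_le (hdiv : ∀ a b : Q, a ≤ b → ∃ c, a = b * c) (a : Q) : a * ⊤ ≤ a := by
  obtain ⟨c, hc⟩ := hdiv a ⊤ le_top
  calc a * ⊤ = ⊤ * ⊤ * c := by rw [hc]; simp only [mul_comm, mul_left_comm, mul_assoc]
    _ ≤ ⊤ * c := mul_le_mul_left le_top c
    _ = a := hc.symm

end aux

/-- In a divisible commutative quantale, given `x ≤ a ≤ b`, the element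
`y = b * (a ⧵ x)` satisfies `y ≤ b` and `a ⊗_b y = x`; hence the smooth slice
`[⊥, b]` is again divisible. -/
theorem smooth_slice_divisible {Q : Type*} [CommSemigroup Q] [CompleteLattice Q] [IsQuantale Q]
    (hdiv : ∀ a b : Q, a ≤ b → ∃ c, a = b * c)
    {x a b : Q} (hxa : x ≤ a) (hab : a ≤ b) :
    b * res a x ≤ b ∧ smul b a (b * res a x) = x := by
  set y := b * res a x with hy
  have hyb : y ≤ b := le_trans (mul_le_mul_right le_top b) (mul_top_le hdiv b)
  refine ⟨hyb, ?_⟩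
  have hba : b * res b a = a := mul_res_eq hdiv hab
  have hax : a * res a x = x := mul_res_eq hdiv hxa
  rw [smul, hba]
  refine le_antisymm ?_ ?_
  · calc a * res b y = res b a * (b * res b y) := by
          conv_lhs => rw [← hba]
          simp only [mul_comm, mul_left_comm, mul_assoc]
      _ ≤ res b a * y := mul_le_mul_right (mul_res_le b y) _
      _ = b * res b a * res a x := by rw [hy]; simp only [mul_comm, mul_left_comm, mul_assoc]
      _ = x := by rw [hba, hax]
  · calc x = a * res a x := hax.symm
      _ ≤ a * res b y := mul_le_mul_right (le_res hy.ge) a
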